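/- arXiv:math/9909055 — 7 statements merged into one kernel-verified Lean document; each statement's English description precedes it below -/
import Mathlib

section
/- For a natural number m, the set W = { ((j*k - 1/4)/(m+2), (j-k)/(m+2)) : j, k positive half-odd integers (i.e., of the form a + 1/2 with a a nonnegative integer) satisfying j + k ≤ m + 1 } has exactly (m+1)(m+2)/2 elements. -/
def HalfOdd (x : ℚ) : Prop := ∃ a : ℕ, x = a + 1/2

theorem stmt_0 (m : ℕ) :
    Set.ncard {p : ℚ × ℚ | ∃ j k : ℚ, HalfOdd j ∧ HalfOdd k ∧ 0 < j ∧ 0 < k ∧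
      j + k ≤ (m : ℚ) + 1 ∧
      p = ((j * k - 1/4) / ((m : ℚ) + 2), (j - k) / ((m : ℚ) + 2))}
    = (m + 1) * (m + 2) / 2 := by
  classical
  set f : ℕ × ℕ → ℚ × ℚ := fun p =>
    ((((p.1 : ℚ) + 1/2) * ((p.2 : ℚ) + 1/2) - 1/4) / ((m : ℚ) + 2),
      (((p.1 : ℚ)) - (p.2 : ℚ)) / ((m : ℚ) + 2)) with hf
  set S : Finset (ℕ × ℕ) :=
    (Finset.range (m+1)).biUnion (fun a => {a} ×ˢ Finset.range (m+1-a)) with hS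
  have hmemS : ∀ p : ℕ × ℕ, p ∈ S ↔ p.1 + p.2 ≤ m := by
    rintro ⟨a, b⟩
    simp only [hS, Finset.mem_biUnion, Finset.mem_product, Finset.mem_singleton,
      Finset.mem_range]
    constructor
    · rintro ⟨c, hc, rfl, hb⟩; omega
    · intro h; exact ⟨a, by omega, rfl, by omega⟩
  have hset : {p : ℚ × ℚ | ∃ j k : ℚ, HalfOdd j ∧ HalfOdd k ∧ 0 < j ∧ 0 < k ∧
      j + k ≤ (m : ℚ) + 1 ∧
      p = ((j * k - 1/4) / ((m : ℚ) + 2), (j - k) / ((m : ℚ) + 2))}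
      = ↑(S.image f) := by
    ext p
    simp only [Set.mem_setOf_eq, Finset.coe_image, Set.mem_image, Finset.mem_coe]
    constructor
    · rintro ⟨j, k, ⟨a, rfl⟩, ⟨b, rfl⟩, _, _, hle, rfl⟩
      refine ⟨(a, b), (hmemS (a, b)).2 ?_, ?_⟩
      · have : (a : ℚ) + (b : ℚ) ≤ m := by linarith
        have hab : a + b ≤ m := by exact_mod_cast this
        omega
      · simp only [hf]; congr 1; ring
    · rintro ⟨⟨a, b⟩, hmem, rfl⟩
      have hab : a + b ≤ m := (hmemS (a, b)).1 hmem
      refine ⟨(a : ℚ) + 1/2, (b : ℚ) + 1/2, ⟨a, rfl⟩, ⟨b, rfl⟩, by positivity, by positivity,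
        ?_, ?_⟩
      · have : (a : ℚ) + b ≤ m := by exact_mod_cast hab
        linarith
      · simp only [hf]; congr 1; ring
  have hm2 : ((m : ℚ) + 2) ≠ 0 := by positivity
  have hinj : Set.InjOn f ↑S := by
    rintro ⟨a, b⟩ _ ⟨a', b'⟩ _ h
    simp only [hf, Prod.mk.injEq, div_eq_div_iff hm2 hm2, mul_eq_mul_right_iff,
      or_iff_left hm2] at h
    obtain ⟨h1, h2⟩ := h
    have hs : (a : ℚ) + b + 1 = (a' : ℚ) + b' + 1 := by
      have h0 : (0:ℚ) ≤ (a : ℚ) + b + 1 := by positivity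
      have h0' : (0:ℚ) ≤ (a' : ℚ) + b' + 1 := by positivity
      nlinarith
    have ha : (a : ℚ) = a' := by linarith
    have hb : (b : ℚ) = b' := by linarith
    have : a = a' := by exact_mod_cast ha
    have : b = b' := by exact_mod_cast hb
    simp_all
  rw [hset, Set.ncard_coe_finset, Finset.card_image_of_injOn hinj]
  have hdisj : ∀ a ∈ Finset.range (m+1), ∀ b ∈ Finset.range (m+1), a ≠ b →
      Disjoint ({a} ×ˢ Finset.range (m+1-a)) ({b} ×ˢ Finset.range (m+1-b)) := by
    intro a _ b _ hab
    simp only [Finset.disjoint_left]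
    rintro ⟨x, y⟩ hx hy
    simp only [Finset.mem_product, Finset.mem_singleton] at hx hy
    exact hab (hx.1 ▸ hy.1 ▸ rfl)
  have hcard : S.card = ∑ a ∈ Finset.range (m+1), (m + 1 - a) := by
    rw [hS, Finset.card_biUnion hdisj]
    apply Finset.sum_congr rfl
    intro a _
    simp [Finset.card_product]
  rw [hcard]
  have h1 : ∑ a ∈ Finset.range (m+1), (m + 1 - a) = ∑ a ∈ Finset.range (m+1), (a + 1) := by
    rw [← Finset.sum_range_reflect (fun j => j + 1) (m+1)]
    apply Finset.sum_congr rfl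
    intro i hi
    simp only [Finset.mem_range] at hi
    omega
  have h2 : (∑ i ∈ Finset.range (m+1), i) * 2 = (m+1) * (m+1-1) :=
    Finset.sum_range_id_mul_two (m+1)
  have h3 : ∑ a ∈ Finset.range (m+1), (a + 1) = (∑ i ∈ Finset.range (m+1), i) + (m+1) := by
    rw [Finset.sum_add_distrib, Finset.sum_const, Finset.card_range, smul_eq_mul, mul_one]
  have h2' : (∑ i ∈ Finset.range (m+1), i) * 2 = (m+1) * m := by simpa using h2
  have h4 : (m+1) * (m+2) = (m+1) * m + 2*(m+1) := by ring
  omega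
end

section
/- Let m ∈ ℕ and define W = { ((jk - 1/4)/(m+2), (j-k)/(m+2)) : j, k positive half-odd integers with j + k ≤ m + 1 }. Let (h,q) ∈ W arise from parameters j, k, and for i ≥ 1 set h₁ⁱ = h + i(i(m+2) - j - k) and q₁ⁱ = q. Then (h₁ⁱ, q₁ⁱ) ∉ W. -/
def Wset (m : ℕ) : Set (ℚ × ℚ) :=
  {p | ∃ j k : ℚ, HalfOdd j ∧ HalfOdd k ∧ 0 < j ∧ 0 < k ∧ j + k ≤ (m : ℚ) + 1 ∧
    p = ((j * k - 1/4) / ((m : ℚ) + 2), (j - k) / ((m : ℚ) + 2))}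

theorem stmt_3 (m : ℕ) (j k : ℚ) (hj : HalfOdd j) (hk : HalfOdd k)
    (hjpos : 0 < j) (hkpos : 0 < k) (hsum : j + k ≤ (m : ℚ) + 1)
    (h q : ℚ) (hh : h = (j * k - 1/4) / ((m : ℚ) + 2))
    (hq : q = (j - k) / ((m : ℚ) + 2))
    (i : ℕ) (hi : 1 ≤ i) :
    (h + (i : ℚ) * ((i : ℚ) * ((m : ℚ) + 2) - j - k), q) ∉ Wset m := by
  rintro ⟨j', k', _, _, hj'pos, hk'pos, hsum', hp⟩
  have ht : (0:ℚ) < (m : ℚ) + 2 := by positivity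
  have hi' : (1:ℚ) ≤ (i:ℚ) := by exact_mod_cast hi
  obtain ⟨h1, h2⟩ := Prod.mk.injEq .. ▸ hp
  rw [hh] at h1
  rw [hq] at h2
  have e1 : j * k - 1/4 + (i : ℚ) * ((i : ℚ) * ((m : ℚ) + 2) - j - k) * ((m:ℚ)+2)
      = j' * k' - 1/4 := by
    field_simp at h1
    linarith [h1]
  have e2 : j - k = j' - k' := by
    field_simp at h2
    linarith [h2]
  have key : (j' + k')^2 = (2*(i:ℚ)*((m:ℚ)+2) - (j + k))^2 := by
    linear_combination -4*e1 - (j - k + j' - k') * e2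
  have hX : (m:ℚ) + 3 ≤ 2*(i:ℚ)*((m:ℚ)+2) - (j + k) := by
    nlinarith [hi', ht, hsum]
  nlinarith [key, hX, hsum', hj'pos, hk'pos]
end

section
/- Let m ∈ ℕ and define W as the set of pairs ((jk - 1/4)/(m+2), (j-k)/(m+2)) with j, k positive half-odd integers and j + k ≤ m + 1. Let (h,q) ∈ W come from parameters j, k, and for i ≥ 1 set h₂ⁱ = h + i(i(m+2) + j + k), q₂ⁱ = q. Then (h₂ⁱ, q₂ⁱ) ∉ W. -/
theorem stmt_4 (m : ℕ) (j k : ℚ) (hj : HalfOdd j) (hk : HalfOdd k)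
    (hjpos : 0 < j) (hkpos : 0 < k) (hsum : j + k ≤ (m : ℚ) + 1)
    (h q : ℚ) (hh : h = (j * k - 1/4) / ((m : ℚ) + 2))
    (hq : q = (j - k) / ((m : ℚ) + 2))
    (i : ℕ) (hi : 1 ≤ i) :
    (h + (i : ℚ) * ((i : ℚ) * ((m : ℚ) + 2) + j + k), q) ∉ Wset m := by
  rintro ⟨j', k', hj', hk', hj'pos, hk'pos, hsum', heq⟩
  have hM : (0:ℚ) < (m : ℚ) + 2 := by positivity
  have hMne : ((m : ℚ) + 2) ≠ 0 := ne_of_gt hM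
  have h1 : h + (i : ℚ) * ((i : ℚ) * ((m : ℚ) + 2) + j + k)
      = (j' * k' - 1/4) / ((m : ℚ) + 2) := congrArg Prod.fst heq
  have h2 : q = (j' - k') / ((m : ℚ) + 2) := congrArg Prod.snd heq
  rw [hh] at h1
  rw [hq] at h2
  have e1 : j' * k' = j * k + (i : ℚ) * ((m : ℚ) + 2) * ((i : ℚ) * ((m : ℚ) + 2) + j + k) := by
    field_simp at h1
    linarith
  have e2 : j' - k' = j - k := by
    field_simp at h2
    linarith
  have hiQ : (1 : ℚ) ≤ (i : ℚ) := by exact_mod_cast hi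
  -- (j'+k')^2 = (j+k+2i(m+2))^2, both positive, but j'+k' ≤ m+1 < j+k+2i(m+2)
  have hS : (j' + k')^2 = (j + k + 2 * (i : ℚ) * ((m : ℚ) + 2))^2 := by
    have : (j' + k')^2 = (j' - k')^2 + 4 * (j' * k') := by ring
    rw [this, e1, e2]; ring
  have hlt : j' + k' < j + k + 2 * (i : ℚ) * ((m : ℚ) + 2) := by
    nlinarith
  nlinarith [hS, hlt, hj'pos, hk'pos, hjpos, hkpos]
end

section
/- Let m ∈ ℕ and define W as the set of pairs ((jk - 1/4)/(m+2), (j-k)/(m+2)) with j, k positive half-odd integers and j + k ≤ m + 1. Let (h,q) ∈ W come from parameters j, k, and for i ≥ 1 set h₃ⁱ = h + k + (i-1)(i(m+2) + j + k) and q₃ⁱ = q + 1. Then (h₃ⁱ, q₃ⁱ) ∉ W. -/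
theorem stmt_5 (m : ℕ) (j k : ℚ) (hj : HalfOdd j) (hk : HalfOdd k)
    (hjpos : 0 < j) (hkpos : 0 < k) (hsum : j + k ≤ (m : ℚ) + 1)
    (h q : ℚ) (hh : h = (j * k - 1/4) / ((m : ℚ) + 2))
    (hq : q = (j - k) / ((m : ℚ) + 2))
    (i : ℕ) (hi : 1 ≤ i) :
    (h + k + ((i : ℚ) - 1) * ((i : ℚ) * ((m : ℚ) + 2) + j + k), q + 1) ∉ Wset m := by
  rintro ⟨j', k', hj', hk', hj'pos, hk'pos, hsum', heq⟩
  have hM : ((m : ℚ) + 2) ≠ 0 := by positivity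
  have hMpos : (0 : ℚ) < (m : ℚ) + 2 := by positivity
  have h1 : h + k + ((i : ℚ) - 1) * ((i : ℚ) * ((m : ℚ) + 2) + j + k)
      = (j' * k' - 1/4) / ((m : ℚ) + 2) := congrArg Prod.fst heq
  have h2 : q + 1 = (j' - k') / ((m : ℚ) + 2) := congrArg Prod.snd heq
  subst hh hq
  have e1 : j' - k' = j - k + ((m : ℚ) + 2) := by
    field_simp at h2; linarith
  have e2 : j' * k' = j * k + (k + ((i : ℚ) - 1) * ((i : ℚ) * ((m : ℚ) + 2) + j + k)) * ((m : ℚ) + 2) := by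
    field_simp at h1; linarith
  have hj'e : j' = k' + (j - k) + ((m : ℚ) + 2) := by linarith
  rw [hj'e] at e2
  have key : (k' - (k + ((i : ℚ) - 1) * ((m : ℚ) + 2))) * (k' + j + (i : ℚ) * ((m : ℚ) + 2)) = 0 := by
    linear_combination e2
  have hi' : (1 : ℚ) ≤ (i : ℚ) := by exact_mod_cast hi
  have hpos : 0 < k' + j + (i : ℚ) * ((m : ℚ) + 2) := by nlinarith
  have hk'eq : k' = k + ((i : ℚ) - 1) * ((m : ℚ) + 2) := by
    rcases mul_eq_zero.1 key with h0 | h0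
    · linarith
    · linarith
  nlinarith [hsum', hj'e, hk'eq]
end

section
/- Let m ∈ ℕ and define W as the set of pairs ((jk - 1/4)/(m+2), (j-k)/(m+2)) with j, k positive half-odd integers and j + k ≤ m + 1. Let (h,q) ∈ W come from parameters j, k, and for i ≥ 1 set h₅ⁱ = h + j + (i-1)(i(m+2) + j + k) and q₅ⁱ = q - 1. Then (h₅ⁱ, q₅ⁱ) ∉ W. -/
theorem stmt_6 (m : ℕ) (j k : ℚ) (hj : HalfOdd j) (hk : HalfOdd k)
    (hjpos : 0 < j) (hkpos : 0 < k) (hsum : j + k ≤ (m : ℚ) + 1)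
    (h q : ℚ) (hh : h = (j * k - 1/4) / ((m : ℚ) + 2))
    (hq : q = (j - k) / ((m : ℚ) + 2))
    (i : ℕ) (hi : 1 ≤ i) :
    (h + j + ((i : ℚ) - 1) * ((i : ℚ) * ((m : ℚ) + 2) + j + k), q - 1) ∉ Wset m := by
  rintro ⟨j', k', hj', hk', hj'pos, hk'pos, hsum', hpair⟩
  have hM : (0:ℚ) < (m : ℚ) + 2 := by positivity
  have hMne : ((m : ℚ) + 2) ≠ 0 := ne_of_gt hM
  have h1 : h + j + ((i : ℚ) - 1) * ((i : ℚ) * ((m : ℚ) + 2) + j + k)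
      = (j' * k' - 1/4) / ((m : ℚ) + 2) := congrArg Prod.fst hpair
  have h2 : q - 1 = (j' - k') / ((m : ℚ) + 2) := congrArg Prod.snd hpair
  rw [hh] at h1
  rw [hq] at h2
  have e1 : j' * k' = j * k + j * ((m:ℚ)+2)
      + ((i:ℚ)-1) * ((i:ℚ)*((m:ℚ)+2)+j+k) * ((m:ℚ)+2) := by
    field_simp at h1
    linarith
  have e2 : j' - k' = j - k - ((m:ℚ)+2) := by
    field_simp at h2
    linarith
  have hi' : (1:ℚ) ≤ (i:ℚ) := by exact_mod_cast hi
  have key : (j' + k') ^ 2 = (j + k + ((m:ℚ)+2)) ^ 2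
      + 4 * ((i:ℚ)-1) * ((m:ℚ)+2) * ((i:ℚ)*((m:ℚ)+2) + j + k) := by
    nlinarith [e1, e2]
  have hX : (0:ℚ) < (i:ℚ)*((m:ℚ)+2) + j + k := by nlinarith
  have hpos : (0:ℚ) ≤ 4 * ((i:ℚ)-1) * ((m:ℚ)+2) * ((i:ℚ)*((m:ℚ)+2) + j + k) :=
    mul_nonneg (mul_nonneg (by linarith) hM.le) hX.le
  have hlt : j' + k' < j + k + ((m:ℚ)+2) := by linarith
  have hsq : (j' + k') ^ 2 < (j + k + ((m:ℚ)+2)) ^ 2 :=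
    pow_lt_pow_left₀ hlt (by linarith) two_ne_zero
  linarith [key, hpos, hsq]
end

section
/- Let m ∈ ℕ, let j, k be positive half-odd integers with j + k ≤ m + 1, and let i be a positive integer. Then there do not exist positive half-odd integers j', k' with j' + k' ≤ m + 1 such that j'k' = (j - i(m+2))(k - i(m+2)) and j' - k' = j - k. -/
theorem stmt_8 (m : ℕ) (j k : ℚ) (hj : HalfOdd j) (hk : HalfOdd k)
    (hjpos : 0 < j) (hkpos : 0 < k) (hsum : j + k ≤ (m : ℚ) + 1)
    (i : ℕ) (hi : 1 ≤ i) :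
    ¬ ∃ j' k' : ℚ, HalfOdd j' ∧ HalfOdd k' ∧ 0 < j' ∧ 0 < k' ∧
      j' + k' ≤ (m : ℚ) + 1 ∧
      j' * k' = (j - (i : ℚ) * ((m : ℚ) + 2)) * (k - (i : ℚ) * ((m : ℚ) + 2)) ∧
      j' - k' = j - k := by
  rintro ⟨j', k', _, _, hj'pos, hk'pos, hsum', hmul, hdiff⟩
  have hi' : (1 : ℚ) ≤ (i : ℚ) := by exact_mod_cast hi
  have ht : (m : ℚ) + 2 ≤ (i : ℚ) * ((m : ℚ) + 2) := by nlinarith [Nat.cast_nonneg (α := ℚ) m]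
  have key : (j' + k' - (j + k - 2 * ((i : ℚ) * ((m : ℚ) + 2)))) *
      (j' + k' + (j + k - 2 * ((i : ℚ) * ((m : ℚ) + 2)))) = 0 := by nlinarith [hmul, hdiff]
  rcases mul_eq_zero.mp key with h | h
  · linarith
  · linarith
end

section
/- Let m ∈ ℕ and c = 3m/(m+2). Suppose h₁, h₂, q₁, q₂ ∈ ℚ are such that (h₁,q₁) and (h₂,q₂) both lie in W^c = { ((jk - 1/4)/(m+2), (j-k)/(m+2)) : j,k positive half-odd integers, j+k ≤ m+1 }, and suppose h₂ - h₁ ∈ (1/2)ℤ with h₂ > h₁ and h₂ - h₁ equals one of the six singular weight shifts i(i(m+2) ∓ (j₁+k₁)), k₁ + (i∓1)(i(m+2) ± (j₁+k₁)), or j₁ + (i∓1)(i(m+2) ± (j₁+k₁)) for some positive integer i (with matching charge shift q₂ - q₁ ∈ {0, 1, -1} respectively), where (j₁,k₁) are the parameters of (h₁,q₁). Then a contradiction follows; i.e., no element of W^c is a singular-vector weight of another element of W^c. -/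
theorem stmt_12 (m : ℕ) (h₁ q₁ h₂ q₂ j₁ k₁ : ℚ)
    (hj₁ : HalfOdd j₁) (hk₁ : HalfOdd k₁) (hj₁pos : 0 < j₁) (hk₁pos : 0 < k₁)
    (hsum₁ : j₁ + k₁ ≤ (m : ℚ) + 1)
    (hh₁ : h₁ = (j₁ * k₁ - 1/4) / ((m : ℚ) + 2))
    (hq₁ : q₁ = (j₁ - k₁) / ((m : ℚ) + 2))
    (hW₂ : (h₂, q₂) ∈ Wset m)
    (hhalfint : ∃ z : ℤ, h₂ - h₁ = (z : ℚ) / 2)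
    (hlt : h₁ < h₂)
    (i : ℕ) (hi : 1 ≤ i)
    (hshift :
      (h₂ - h₁ = (i : ℚ) * ((i : ℚ) * ((m : ℚ) + 2) - (j₁ + k₁)) ∧ q₂ - q₁ = 0) ∨
      (h₂ - h₁ = (i : ℚ) * ((i : ℚ) * ((m : ℚ) + 2) + (j₁ + k₁)) ∧ q₂ - q₁ = 0) ∨
      (h₂ - h₁ = k₁ + ((i : ℚ) - 1) * ((i : ℚ) * ((m : ℚ) + 2) + (j₁ + k₁)) ∧ q₂ - q₁ = 1) ∨
      (h₂ - h₁ = k₁ + ((i : ℚ) + 1) * ((i : ℚ) * ((m : ℚ) + 2) - (j₁ + k₁)) ∧ q₂ - q₁ = 1) ∨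
      (h₂ - h₁ = j₁ + ((i : ℚ) - 1) * ((i : ℚ) * ((m : ℚ) + 2) + (j₁ + k₁)) ∧ q₂ - q₁ = -1) ∨
      (h₂ - h₁ = j₁ + ((i : ℚ) + 1) * ((i : ℚ) * ((m : ℚ) + 2) - (j₁ + k₁)) ∧ q₂ - q₁ = -1)) :
    False := by
  obtain ⟨j₂, k₂, hj₂, hk₂, hj₂pos, hk₂pos, hsum₂, hp⟩ := hW₂
  rw [Prod.ext_iff] at hp
  obtain ⟨hh₂, hq₂⟩ := hp
  simp only at hh₂ hq₂
  set M : ℚ := (m : ℚ) + 2 with hMdef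
  have hm0 : (0:ℚ) ≤ (m:ℚ) := Nat.cast_nonneg m
  have hM2 : (2:ℚ) ≤ M := by simp only [hMdef]; linarith
  have hMne : M ≠ 0 := by linarith
  have hi' : (1:ℚ) ≤ (i:ℚ) := by exact_mod_cast hi
  obtain ⟨a, ha⟩ := hj₁
  obtain ⟨b, hb⟩ := hk₁
  have hja : (1:ℚ)/2 ≤ j₁ := by
    have : (0:ℚ) ≤ (a:ℚ) := Nat.cast_nonneg a
    rw [ha]; linarith
  have hkb : (1:ℚ)/2 ≤ k₁ := by
    have : (0:ℚ) ≤ (b:ℚ) := Nat.cast_nonneg b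
    rw [hb]; linarith
  have hiM : M ≤ (i:ℚ)*M := by nlinarith
  rcases hshift with ⟨he, hq⟩ | ⟨he, hq⟩ | ⟨he, hq⟩ | ⟨he, hq⟩ | ⟨he, hq⟩ | ⟨he, hq⟩ <;>
    rw [hh₂, hh₁] at he <;> rw [hq₂, hq₁] at hq <;>
    rw [div_sub_div_same, div_eq_iff hMne] at he hq
  · -- case 1 : T = 2iM - (j₁+k₁), q shift 0
    have hT : (j₂+k₂)^2 = (2*(i:ℚ)*M - (j₁+k₁))^2 := by linear_combination ((j₂-k₂)+(j₁-k₁))*hq + 4*he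
    rcases sq_eq_sq_iff_eq_or_eq_neg.mp hT with h | h <;> linarith
  · have hT : (j₂+k₂)^2 = (2*(i:ℚ)*M + (j₁+k₁))^2 := by linear_combination ((j₂-k₂)+(j₁-k₁))*hq + 4*he
    rcases sq_eq_sq_iff_eq_or_eq_neg.mp hT with h | h <;> linarith
  · have hT : (j₂+k₂)^2 = ((j₁+k₁) + (2*(i:ℚ)-1)*M)^2 := by linear_combination ((j₂-k₂)+(j₁-k₁)+M)*hq + 4*he
    rcases sq_eq_sq_iff_eq_or_eq_neg.mp hT with h | h <;> linarith
  · have hT : (j₂+k₂)^2 = ((2*(i:ℚ)+1)*M - (j₁+k₁))^2 := by linear_combination ((j₂-k₂)+(j₁-k₁)+M)*hq + 4*he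
    rcases sq_eq_sq_iff_eq_or_eq_neg.mp hT with h | h <;> linarith
  · have hT : (j₂+k₂)^2 = ((j₁+k₁) + (2*(i:ℚ)-1)*M)^2 := by linear_combination ((j₂-k₂)+(j₁-k₁)-M)*hq + 4*he
    rcases sq_eq_sq_iff_eq_or_eq_neg.mp hT with h | h <;> linarith
  · have hT : (j₂+k₂)^2 = ((2*(i:ℚ)+1)*M - (j₁+k₁))^2 := by linear_combination ((j₂-k₂)+(j₁-k₁)-M)*hq + 4*he
    rcases sq_eq_sq_iff_eq_or_eq_neg.mp hT with h | h <;> linarith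
end
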